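/- For fixed n ≥ 2 and k with 1 ≤ k ≤ n, the limit as p → ∞ of (n-1)/(n(2n-1)^p) · Σ_{x=1}^{p-4} Σ_{y=1}^{p-x-3} 4·((2n-2)(2n-3)^{x-1} - 2(k-1))·((2n-1)^{p-x-y-2} - 1)·((2n-2)(2n-3)^{y-1} - 2(k-1) - 1) equals (4(n-1)^4 - (8k-6)(n-1)^2 + 4k^2 - 6k + 2)/(n(n-1)(2n-1)^2). -/

import Mathlib

open Filter Finset

private lemma tri_sum (f : ℕ → ℕ → ℝ) (m : ℕ) :
    ∑ i ∈ range m, ∑ j ∈ range (m - i), f i j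
      = ∑ s ∈ range m, ∑ p ∈ antidiagonal s, f p.1 p.2 := by
  induction m with
  | zero => simp
  | succ m ih =>
    rw [sum_range_succ (fun s => ∑ p ∈ antidiagonal s, f p.1 p.2) m, ← ih,
      sum_range_succ (fun i => ∑ j ∈ range (m + 1 - i), f i j) m]
    have h1 : ∀ i ∈ range m, ∑ j ∈ range (m + 1 - i), f i j
        = ∑ j ∈ range (m - i), f i j + f i (m - i) := by
      intro i hi
      rw [mem_range] at hi
      rw [show m + 1 - i = (m - i) + 1 by omega, sum_range_succ]
    rw [sum_congr rfl h1, sum_add_distrib,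
      Nat.sum_antidiagonal_eq_sum_range_succ_mk (fun p => f p.1 p.2) m, sum_range_succ]
    simp only [Nat.add_sub_cancel_left, Nat.sub_self, sum_range_one]
    ring

private lemma abs_aux {A b c : ℝ} (hA : 0 < A) (hb : 1 ≤ b) (hc : 0 ≤ c) (i : ℕ) :
    |A * b ^ i - c| ≤ (A + c) * b ^ i := by
  have h1 : (1 : ℝ) ≤ b ^ i := one_le_pow₀ hb
  rw [abs_le]
  constructor <;> nlinarith [mul_nonneg hc (le_trans zero_le_one h1)]

private lemma aux (a b A c N : ℝ) (ha : 3 ≤ a) (hb : 1 ≤ b) (hba : b < a)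
    (hc : 0 ≤ c) (hA : 0 < A) (hN : 2 ≤ N) :
    Tendsto (fun q : ℕ => (N - 1) / (N * a ^ (q + 5)) *
        ∑ i ∈ range (q + 1), ∑ j ∈ range (q + 1 - i),
          4 * (A * b ^ i - c) * (a ^ (q + 1 - i - j) - 1) * (A * b ^ j - c - 1))
      atTop
      (nhds (4 * (N - 1) / (N * a ^ 4) *
        ((A * (1 - b / a)⁻¹ - c * (1 - 1 / a)⁻¹) *
          (A * (1 - b / a)⁻¹ - (c + 1) * (1 - 1 / a)⁻¹)))) := by
  have ha0 : (0 : ℝ) < a := by linarith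
  have ha0' : a ≠ 0 := ne_of_gt ha0
  have hb0 : (0 : ℝ) < b := by linarith
  have hN0 : N ≠ 0 := by positivity
  have hr0 : (0 : ℝ) ≤ b / a := by positivity
  have hr1 : b / a < 1 := (div_lt_one ha0).2 hba
  have hi0 : (0 : ℝ) ≤ 1 / a := by positivity
  have hi1 : 1 / a < 1 := by rw [div_lt_one ha0]; linarith
  set u : ℕ → ℝ := fun i => (A * b ^ i - c) / a ^ i with hu_def
  set v : ℕ → ℝ := fun j => (A * b ^ j - c - 1) / a ^ j with hv_def
  set C : ℝ := 4 * (N - 1) / (N * a ^ 4) with hC_def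
  set U : ℝ := A * (1 - b / a)⁻¹ - c * (1 - 1 / a)⁻¹ with hU_def
  set V : ℝ := A * (1 - b / a)⁻¹ - (c + 1) * (1 - 1 / a)⁻¹ with hV_def
  -- sums of u, v
  have g1 : HasSum (fun i : ℕ => (b / a) ^ i) (1 - b / a)⁻¹ := hasSum_geometric_of_lt_one hr0 hr1
  have g2 : HasSum (fun i : ℕ => (1 / a) ^ i) (1 - 1 / a)⁻¹ := hasSum_geometric_of_lt_one hi0 hi1
  have hu : HasSum u U := by
    have := (g1.mul_left A).sub (g2.mul_left c)
    refine this.congr_fun fun i => ?_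
    simp only [hu_def, div_pow, one_pow]
    field_simp
  have hv : HasSum v V := by
    have := (g1.mul_left A).sub (g2.mul_left (c + 1))
    refine this.congr_fun fun i => ?_
    simp only [hv_def, div_pow, one_pow]
    field_simp
    ring
  -- summable norms
  have hpow : ∀ i : ℕ, (0:ℝ) < a ^ i := fun i => pow_pos ha0 i
  have hnu : Summable fun i => ‖u i‖ := by
    refine Summable.of_nonneg_of_le (fun i => norm_nonneg _) (fun i => ?_)
      ((summable_geometric_of_lt_one hr0 hr1).mul_left (A + c))
    simp only [hu_def, Real.norm_eq_abs, abs_div, abs_of_pos (hpow i), div_pow]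
    rw [div_le_iff₀ (hpow i)]
    have e : (A + c) * (b ^ i / a ^ i) * a ^ i = (A + c) * b ^ i := by field_simp
    rw [e]
    exact abs_aux hA hb hc i
  have hnv : Summable fun j => ‖v j‖ := by
    refine Summable.of_nonneg_of_le (fun i => norm_nonneg _) (fun i => ?_)
      ((summable_geometric_of_lt_one hr0 hr1).mul_left (A + (c + 1)))
    simp only [hv_def, Real.norm_eq_abs, abs_div, abs_of_pos (hpow i), div_pow]
    rw [div_le_iff₀ (hpow i)]
    have e : (A + (c + 1)) * (b ^ i / a ^ i) * a ^ i = (A + (c + 1)) * b ^ i := by field_simp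
    rw [e]
    have := abs_aux hA hb (by linarith : (0:ℝ) ≤ c + 1) i
    calc |A * b ^ i - c - 1| = |A * b ^ i - (c + 1)| := by ring_nf
      _ ≤ (A + (c + 1)) * b ^ i := this
  -- convergence of triangle sums
  have hF : Summable fun s => ∑ p ∈ antidiagonal s, u p.1 * v p.2 :=
    (summable_norm_sum_mul_antidiagonal_of_summable_norm hnu hnv).of_norm
  have htsumF : ∑' s, ∑ p ∈ antidiagonal s, u p.1 * v p.2 = U * V := by
    rw [← tsum_mul_tsum_eq_tsum_sum_antidiagonal_of_summable_norm hnu hnv,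
      hu.tsum_eq, hv.tsum_eq]
  have hT : Tendsto (fun q : ℕ => ∑ i ∈ range (q + 1), ∑ j ∈ range (q + 1 - i), u i * v j)
      atTop (nhds (U * V)) := by
    have h1 := hF.hasSum.tendsto_sum_nat
    rw [htsumF] at h1
    have h2 := (tendsto_add_atTop_iff_nat 1).2 h1
    exact h2.congr fun q => (tri_sum (fun i j => u i * v j) (q + 1)).symm
  -- error term tends to zero
  set D : ℝ := (N - 1) * (4 * (A + c) * (A + c + 1)) / (N * a ^ 5) with hD_def
  have hErr : Tendsto (fun q : ℕ => (N - 1) / (N * a ^ (q + 5)) *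
      ∑ i ∈ range (q + 1), ∑ j ∈ range (q + 1 - i),
        4 * (A * b ^ i - c) * (A * b ^ j - c - 1)) atTop (nhds 0) := by
    have hbnd : Tendsto (fun q : ℕ => D * ((q : ℝ) + 1) ^ 2 * (b / a) ^ q) atTop (nhds 0) := by
      have h1 : Summable fun m : ℕ => ((m : ℝ)) ^ 2 * (b / a) ^ m :=
        summable_pow_mul_geometric_of_norm_lt_one 2 (by rw [Real.norm_eq_abs, abs_of_nonneg hr0]; exact hr1)
      have h2 := (tendsto_add_atTop_iff_nat 1).2 h1.tendsto_atTop_zero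
      have h3 : Tendsto (fun q : ℕ => (D * (a / b)) * (((q + 1 : ℕ) : ℝ) ^ 2 * (b / a) ^ (q + 1)))
          atTop (nhds ((D * (a / b)) * 0)) := h2.const_mul _
      rw [mul_zero] at h3
      refine h3.congr fun q => ?_
      push_cast
      rw [pow_succ]
      field_simp
      linear_combination (D * b * b ^ q * a⁻¹ ^ q) * mul_inv_cancel₀ ha0'
    refine squeeze_zero_norm (fun q => ?_) hbnd
    have hM : (0:ℝ) ≤ 4 * (A + c) * (A + c + 1) := by positivity
    have hRq : |∑ i ∈ range (q + 1), ∑ j ∈ range (q + 1 - i),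
        4 * (A * b ^ i - c) * (A * b ^ j - c - 1)|
        ≤ ((q : ℝ) + 1) ^ 2 * (4 * (A + c) * (A + c + 1) * b ^ q) := by
      calc |∑ i ∈ range (q + 1), ∑ j ∈ range (q + 1 - i),
            4 * (A * b ^ i - c) * (A * b ^ j - c - 1)|
          ≤ ∑ i ∈ range (q + 1), ∑ j ∈ range (q + 1 - i),
            |4 * (A * b ^ i - c) * (A * b ^ j - c - 1)| := by
            refine (abs_sum_le_sum_abs _ _).trans ?_
            exact sum_le_sum fun i _ => abs_sum_le_sum_abs _ _
        _ ≤ ∑ i ∈ range (q + 1), ∑ j ∈ range (q + 1 - i),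
            (4 * (A + c) * (A + c + 1) * b ^ q) := by
            refine sum_le_sum fun i hi => sum_le_sum fun j hj => ?_
            rw [mem_range] at hi hj
            have e1 := abs_aux hA hb hc i
            have e2 : |A * b ^ j - c - 1| ≤ (A + c + 1) * b ^ j := by
              have := abs_aux hA hb (by linarith : (0:ℝ) ≤ c + 1) j
              calc |A * b ^ j - c - 1| = |A * b ^ j - (c + 1)| := by ring_nf
                _ ≤ (A + (c + 1)) * b ^ j := this
                _ = (A + c + 1) * b ^ j := by ring
            have e3 : b ^ i * b ^ j ≤ b ^ q := by
              rw [← pow_add]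
              exact pow_le_pow_right₀ hb (by omega)
            have h1 : (0:ℝ) ≤ b ^ i := le_of_lt (pow_pos hb0 i)
            have h2 : (0:ℝ) ≤ b ^ j := le_of_lt (pow_pos hb0 j)
            calc |4 * (A * b ^ i - c) * (A * b ^ j - c - 1)|
                = 4 * (|A * b ^ i - c| * |A * b ^ j - c - 1|) := by
                  rw [abs_mul, abs_mul]; simp [abs_of_nonneg]; ring
              _ ≤ 4 * (((A + c) * b ^ i) * ((A + c + 1) * b ^ j)) := by
                  have := mul_le_mul e1 e2 (abs_nonneg _) (by positivity)
                  linarith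
              _ = 4 * (A + c) * (A + c + 1) * (b ^ i * b ^ j) := by ring
              _ ≤ 4 * (A + c) * (A + c + 1) * b ^ q := by
                  exact mul_le_mul_of_nonneg_left e3 hM
        _ ≤ ((q : ℝ) + 1) ^ 2 * (4 * (A + c) * (A + c + 1) * b ^ q) := by
            have hterm : (0:ℝ) ≤ 4 * (A + c) * (A + c + 1) * b ^ q := by positivity
            have step1 : ∀ i ∈ range (q + 1),
                ∑ _j ∈ range (q + 1 - i), (4 * (A + c) * (A + c + 1) * b ^ q)
                ≤ ((q:ℝ) + 1) * (4 * (A + c) * (A + c + 1) * b ^ q) := by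
              intro i hi
              rw [sum_const, card_range, nsmul_eq_mul]
              refine mul_le_mul_of_nonneg_right ?_ hterm
              have h1 : (q + 1 - i : ℕ) ≤ q + 1 := by omega
              calc ((q + 1 - i : ℕ) : ℝ) ≤ ((q + 1 : ℕ) : ℝ) := Nat.cast_le.2 h1
                _ = (q : ℝ) + 1 := by push_cast; ring
            calc ∑ i ∈ range (q + 1), ∑ _j ∈ range (q + 1 - i),
                  (4 * (A + c) * (A + c + 1) * b ^ q)
                ≤ ∑ _i ∈ range (q + 1), (((q:ℝ) + 1) * (4 * (A + c) * (A + c + 1) * b ^ q)) :=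
                  sum_le_sum step1
              _ = ((q : ℝ) + 1) ^ 2 * (4 * (A + c) * (A + c + 1) * b ^ q) := by
                  rw [sum_const, card_range, nsmul_eq_mul]
                  push_cast
                  ring
    have hpos : (0:ℝ) < N * a ^ (q + 5) := by positivity
    have hN1 : (0:ℝ) ≤ N - 1 := by linarith
    rw [Real.norm_eq_abs, abs_mul, abs_div, abs_of_nonneg hN1, abs_of_pos hpos]
    calc (N - 1) / (N * a ^ (q + 5)) * |∑ i ∈ range (q + 1), ∑ j ∈ range (q + 1 - i),
          4 * (A * b ^ i - c) * (A * b ^ j - c - 1)|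
        ≤ (N - 1) / (N * a ^ (q + 5)) *
          (((q : ℝ) + 1) ^ 2 * (4 * (A + c) * (A + c + 1) * b ^ q)) :=
          mul_le_mul_of_nonneg_left hRq (by positivity)
      _ = D * ((q : ℝ) + 1) ^ 2 * (b / a) ^ q := by
          rw [hD_def, div_pow, pow_add]
          field_simp
  -- split identity
  have hsplit : ∀ q : ℕ, (N - 1) / (N * a ^ (q + 5)) *
      ∑ i ∈ range (q + 1), ∑ j ∈ range (q + 1 - i),
        4 * (A * b ^ i - c) * (a ^ (q + 1 - i - j) - 1) * (A * b ^ j - c - 1)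
      = C * (∑ i ∈ range (q + 1), ∑ j ∈ range (q + 1 - i), u i * v j)
        - (N - 1) / (N * a ^ (q + 5)) *
          ∑ i ∈ range (q + 1), ∑ j ∈ range (q + 1 - i),
            4 * (A * b ^ i - c) * (A * b ^ j - c - 1) := by
    intro q
    rw [mul_sum, mul_sum, mul_sum, ← sum_sub_distrib]
    refine sum_congr rfl fun i hi => ?_
    rw [mul_sum, mul_sum, mul_sum, ← sum_sub_distrib]
    refine sum_congr rfl fun j hj => ?_
    rw [mem_range] at hi hj
    have hij : i + j ≤ q + 1 := by omega
    have e1 : q + 1 - i - j = (q + 1) - (i + j) := by omega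
    rw [e1, pow_sub₀ a ha0' hij]
    simp only [hu_def, hv_def, hC_def]
    have h5 : a ^ (q + 5) = a ^ (q + 1) * a ^ 4 := by rw [← pow_add]
    rw [h5, pow_add]
    have hq1 : a ^ (q+1) ≠ 0 := ne_of_gt (pow_pos ha0 _)
    have hi' : (a:ℝ) ^ i ≠ 0 := ne_of_gt (pow_pos ha0 _)
    have hj' : (a:ℝ) ^ j ≠ 0 := ne_of_gt (pow_pos ha0 _)
    field_simp
    ring
  -- combine
  have hfinal := ((hT.const_mul C).sub hErr)
  rw [sub_zero] at hfinal
  exact hfinal.congr fun q => (hsplit q).symm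

theorem stmt_13 (n k : ℕ) (hn : 2 ≤ n) (hk1 : 1 ≤ k) (hkn : k ≤ n) :
    Tendsto (fun p : ℕ =>
        ((n : ℝ) - 1) / (n * (2 * n - 1) ^ (p : ℕ)) *
          ∑ x ∈ Finset.Icc 1 (p - 4), ∑ y ∈ Finset.Icc 1 (p - x - 3),
            4 * ((2 * (n : ℝ) - 2) * (2 * n - 3) ^ (x - 1) - 2 * ((k : ℝ) - 1)) *
              ((2 * (n : ℝ) - 1) ^ (p - x - y - 2) - 1) *
              ((2 * (n : ℝ) - 2) * (2 * n - 3) ^ (y - 1) - 2 * ((k : ℝ) - 1) - 1))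
      atTop
      (nhds ((4 * ((n : ℝ) - 1) ^ 4 - (8 * k - 6) * ((n : ℝ) - 1) ^ 2 +
          4 * k ^ 2 - 6 * k + 2) / (n * (n - 1) * (2 * n - 1) ^ 2))) := by
  have hN : (2 : ℝ) ≤ (n : ℝ) := by exact_mod_cast hn
  have hK : (1 : ℝ) ≤ (k : ℝ) := by exact_mod_cast hk1
  set N : ℝ := (n : ℝ)
  set K : ℝ := (k : ℝ)
  have haux := aux (2 * N - 1) (2 * N - 3) (2 * N - 2) (2 * (K - 1)) N
    (by linarith) (by linarith) (by linarith) (by linarith) (by linarith) hN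
  rw [← tendsto_add_atTop_iff_nat 5]
  have hlim : (4 * (N - 1) ^ 4 - (8 * K - 6) * (N - 1) ^ 2 + 4 * K ^ 2 - 6 * K + 2) /
      (N * (N - 1) * (2 * N - 1) ^ 2)
      = 4 * (N - 1) / (N * (2 * N - 1) ^ 4) *
        (((2 * N - 2) * (1 - (2 * N - 3) / (2 * N - 1))⁻¹ -
            2 * (K - 1) * (1 - 1 / (2 * N - 1))⁻¹) *
          ((2 * N - 2) * (1 - (2 * N - 3) / (2 * N - 1))⁻¹ -
            (2 * (K - 1) + 1) * (1 - 1 / (2 * N - 1))⁻¹)) := by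
    have h1 : N ≠ 0 := by linarith
    have h2 : N - 1 ≠ 0 := by intro h; linarith [sub_eq_zero.1 h]
    have h3 : 2 * N - 1 ≠ 0 := by intro h; nlinarith [sub_eq_zero.1 h]
    have h4 : 1 - (2 * N - 3) / (2 * N - 1) = 2 / (2 * N - 1) := by
      field_simp; ring
    have h5 : 1 - 1 / (2 * N - 1) = (2 * N - 2) / (2 * N - 1) := by
      field_simp
      ring
    rw [h4, h5]
    have h6 : (2:ℝ) * N - 2 ≠ 0 := by intro h; nlinarith [sub_eq_zero.1 h]
    field_simp
    ring
  rw [hlim]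
  refine haux.congr fun q => ?_
  -- rewrite sum over Icc into sum over range
  have hIcc : ∀ (m : ℕ) (f : ℕ → ℝ), ∑ x ∈ Finset.Icc 1 m, f x = ∑ i ∈ range m, f (i + 1) := by
    intro m f
    induction m with
    | zero => simp
    | succ m ih =>
      rw [Finset.sum_Icc_succ_top (by omega : 1 ≤ m + 1), ih, sum_range_succ]
  have hb1 : q + 5 - 4 = q + 1 := by omega
  congr 1
  rw [hb1, hIcc]
  refine sum_congr rfl fun i hi => ?_
  rw [mem_range] at hi
  have hb2 : q + 5 - (i + 1) - 3 = q + 1 - i := by omega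
  rw [hb2, hIcc]
  refine sum_congr rfl fun j hj => ?_
  rw [mem_range] at hj
  have e1 : i + 1 - 1 = i := by omega
  have e2 : j + 1 - 1 = j := by omega
  have e3 : q + 5 - (i + 1) - (j + 1) - 2 = q + 1 - i - j := by omega
  rw [e1, e2, e3]
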